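/- Let (Q_j)_{j∈ℤ} be a family of objects of C. Let (A_•, f_•) be a complex of length n in C such that each A_i is equipped with an identification A_i = ⊕_{α∈J_i} Q_{d_i(α)} as a finite biproduct, where J_i is a finite index set and d_i : J_i → ℤ. Suppose that for every 1 ≤ i ≤ n the matrix entries of f_i with respect to these biproduct decompositions satisfy: the entry Q_{d_i(α)} ⟶ Q_{d_{i−1}(β)} is zero whenever d_{i−1}(β) < d_i(α), and is equal to c_i(β,α) · id for a scalar c_i(β,α) ∈ k whenever d_{i−1}(β) = d_i(α). Suppose further that for each j ∈ ℤ the complex of finite-dimensional k-vector spaces k^{d_n^{−1}(j)} → k^{d_{n−1}^{−1}(j)} → ⋯ → k^{d_0^{−1}(j)}, with differentials given by the scalar matrices (c_i(β,α)) over pairs with d_i(α) = d_{i−1}(β) = j, is exact at every spot (in particular the first map is injective and the last map is surjective). Then the zero object is a convolution of (A_•, f_•), and moreover every convolution of (A_•, f_•) is isomorphic to the zero object. -/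

import Mathlib

/-!
Statement 4: In a `k`-linear pretriangulated category `C`, let `(A_•, f_•)` be a length-`n`
complex whose terms are identified with finite biproducts of objects `Q j` (`j ∈ ℤ`), whose
differentials have no matrix entries of "negative degree" (entries `Q_{d_{i+1}(α)} ⟶ Q_{d_i(β)}`
vanish when `d_i(β) < d_{i+1}(α)`) and whose "degree-zero" entries are the scalars
`c_i(β, α) • id`.  If for every `j ∈ ℤ` the resulting complex of finite-dimensional
`k`-vector spaces is exact at every spot, then the zero object is a convolution of
`(A_•, f_•)` and every convolution of `(A_•, f_•)` is a zero object.
-/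

open CategoryTheory CategoryTheory.Limits CategoryTheory.Pretriangulated

variable {C : Type*} [Category C] [Preadditive C] [HasZeroObject C] [HasShift C ℤ]
  [∀ n : ℤ, (shiftFunctor C n).Additive] [Pretriangulated C]

/-- A Postnikov system for the length-`n` complex
`A n ⟶ A (n-1) ⟶ ⋯ ⟶ A 0` (with differentials `f i : A (i+1) ⟶ A i`). -/
structure PostnikovSystem (n : ℕ) (A : ℕ → C) (f : ∀ i : ℕ, A (i + 1) ⟶ A i) where
  B : ℕ → C
  g : ∀ i : ℕ, (B i)⟦(-(i : ℤ))⟧ ⟶ A i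
  h : ∀ i : ℕ, A (i + 1) ⟶ (B i)⟦(-(i : ℤ))⟧
  g0_isIso : IsIso (g 0)
  comm : ∀ i : ℕ, i < n → h i ≫ g i = f i
  tri : ∀ i : ℕ, i < n →
    ∃ d : (B i)⟦(-(i : ℤ))⟧ ⟶ ((B (i + 1))⟦(-((i : ℤ) + 1))⟧)⟦(1 : ℤ)⟧,
      Triangle.mk (g (i + 1)) (h i) d ∈ distTriang C

/-- `X` is a (right) convolution of the length-`n` complex `(A, f)` if there is a Postnikov
system for it whose final object `B n` is isomorphic to `X`. -/
def IsConvolution (n : ℕ) (A : ℕ → C) (f : ∀ i : ℕ, A (i + 1) ⟶ A i) (X : C) : Prop :=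
  ∃ P : PostnikovSystem n A f, Nonempty (P.B n ≅ X)

/-- The degree-`j` piece of the complex of `k`-vector spaces associated to the data of the
index sets `J`, degrees `d` and scalar entries `c`: the map
`k^{d_{i+1}^{-1}(j)} → k^{d_i^{-1}(j)}` with matrix `(c i β α)`. -/
def scalarMap {k : Type*} [Field k] {J : ℕ → Type} [∀ i, Fintype (J i)]
    (d : ∀ i, J i → ℤ) (c : ∀ i, J i → J (i + 1) → k) (i : ℕ) (j : ℤ)
    (v : {α : J (i + 1) // d (i + 1) α = j} → k) : {β : J i // d i β = j} → k :=
  fun β => ∑ α : {α : J (i + 1) // d (i + 1) α = j}, c i β.1 α.1 * v α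


set_option linter.unusedSectionVars false
set_option linter.unusedTactic false



section LinAlg

variable {k : Type*} [Field k]

/-- Apply a scalar matrix to a vector with entries in a `k`-module `H`. -/
def mvH {T1 T2 : Type} [Fintype T2] (M : Matrix T1 T2 k) {H : Type*} [AddCommGroup H]
    [Module k H] (v : T2 → H) : T1 → H :=
  fun b => ∑ g, M b g • v g

lemma mvH_mul {T1 T2 T3 : Type} [Fintype T2] [Fintype T3] (M : Matrix T1 T2 k)
    (N : Matrix T2 T3 k) {H : Type*} [AddCommGroup H] [Module k H] (v : T3 → H) :
    mvH (M * N) v = mvH M (mvH N v) := by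
  funext b
  simp only [mvH, Matrix.mul_apply, Finset.sum_smul, Finset.smul_sum, smul_smul]
  rw [Finset.sum_comm]

lemma mvH_one {T1 : Type} [Fintype T1] [DecidableEq T1] {H : Type*} [AddCommGroup H]
    [Module k H] (v : T1 → H) : mvH (1 : Matrix T1 T1 k) v = v := by
  funext b
  simp [mvH, Matrix.one_apply]

lemma mvH_zero_vec {T1 T2 : Type} [Fintype T2] (M : Matrix T1 T2 k) {H : Type*}
    [AddCommGroup H] [Module k H] : mvH M (0 : T2 → H) = 0 := by
  funext b; simp [mvH]

lemma mvH_sub_mat {T1 T2 : Type} [Fintype T2] (M N : Matrix T1 T2 k) {H : Type*}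
    [AddCommGroup H] [Module k H] (v : T2 → H) :
    mvH (M - N) v = mvH M v - mvH N v := by
  funext b; simp [mvH, sub_smul, Finset.sum_sub_distrib]

set_option synthInstance.maxHeartbeats 400000 in
lemma mvH_lift {T0 T1 T2 : Type} [Fintype T0] [Fintype T1] [Fintype T2]
    (ψ : Matrix T0 T1 k) (φ : Matrix T1 T2 k)
    (hexact : ∀ v : T1 → k, ψ.mulVec v = 0 → ∃ w : T2 → k, φ.mulVec w = v)
    {H : Type*} [AddCommGroup H] [Module k H] (v : T1 → H) (hv : mvH ψ v = 0) :
    ∃ w : T2 → H, mvH φ w = v := by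
  classical
  set ψl := ψ.mulVecLin with hψl
  set φl := φ.mulVecLin with hφl
  set K := LinearMap.ker ψl with hK
  -- a linear map `D → K` which is surjective
  set D := LinearMap.ker (ψl ∘ₗ φl) with hD
  have hφD : ∀ x : D, φl x.1 ∈ K := fun x => x.2
  set φ'' : D →ₗ[k] K := LinearMap.codRestrict K (φl ∘ₗ D.subtype) (fun x => x.2) with hφ''
  have hsurj : LinearMap.range φ'' = ⊤ := by
    rw [LinearMap.range_eq_top]
    rintro ⟨x, hx⟩
    obtain ⟨w, hw⟩ := hexact x hx
    have hwD : w ∈ D := by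
      have hφw : φl w = x := by simp [hφl, Matrix.mulVecLin_apply, hw]
      have : ψl (φl w) = 0 := by rw [hφw]; exact hx
      simpa [hD, LinearMap.mem_ker] using this
    exact ⟨⟨w, hwD⟩, Subtype.ext (by simpa [φ'', hφl] using hw)⟩
  obtain ⟨σ0, hσ0⟩ := LinearMap.exists_rightInverse_of_surjective φ'' hsurj
  set σ : K →ₗ[k] (T2 → k) := D.subtype ∘ₗ σ0 with hσ
  have hφσ : ∀ x : K, φl (σ x) = x.1 := by
    intro x
    have := congrArg (fun F => (F x).1) hσ0
    exact this
  obtain ⟨K', hK'⟩ := Submodule.exists_isCompl K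
  set π : (T1 → k) →ₗ[k] K := Submodule.projectionOnto K K' hK' with hπ
  set ρ : (T1 → k) →ₗ[k] (T2 → k) := σ ∘ₗ π with hρ
  set P : (T1 → k) →ₗ[k] (T1 → k) := φl ∘ₗ ρ with hP
  have hPK : ∀ x ∈ K, P x = x := by
    intro x hx
    simp only [hP, hρ, LinearMap.comp_apply]
    rw [hπ, Submodule.projectionOnto_apply_left hK' ⟨x, hx⟩]
    exact hφσ ⟨x, hx⟩
  -- build μ with μ ∘ ψl = id - P
  obtain ⟨R', hR'⟩ := Submodule.exists_isCompl (LinearMap.range ψl)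
  set projR : (T0 → k) →ₗ[k] (LinearMap.range ψl) :=
    Submodule.projectionOnto _ R' hR' with hprojR
  obtain ⟨τ, hτ⟩ := LinearMap.exists_rightInverse_of_surjective ψl.rangeRestrict
    (LinearMap.range_eq_top.2 ψl.surjective_rangeRestrict)
  set μ : (T0 → k) →ₗ[k] (T1 → k) := (LinearMap.id - P) ∘ₗ τ ∘ₗ projR with hμ
  have hμψ : μ ∘ₗ ψl = LinearMap.id - P := by
    apply LinearMap.ext; intro x
    have h1 : projR (ψl x) = ⟨ψl x, LinearMap.mem_range_self _ x⟩ := by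
      rw [hprojR, Submodule.projectionOnto_apply_left hR' ⟨ψl x, LinearMap.mem_range_self _ x⟩]
    simp only [hμ, LinearMap.comp_apply, h1]
    have h2 : ψl (τ ⟨ψl x, LinearMap.mem_range_self _ x⟩) = ψl x := by
      have := congrArg (fun F => (F ⟨ψl x, LinearMap.mem_range_self _ x⟩).1) hτ
      simpa using this
    have h3 : τ ⟨ψl x, LinearMap.mem_range_self _ x⟩ - x ∈ K := by
      simp [hK, LinearMap.mem_ker, map_sub, h2]
    have h4 : P (τ ⟨ψl x, LinearMap.mem_range_self _ x⟩ - x) =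
        τ ⟨ψl x, LinearMap.mem_range_self _ x⟩ - x := hPK _ h3
    simp only [LinearMap.sub_apply, LinearMap.id_apply]
    rw [map_sub] at h4
    rw [sub_eq_iff_eq_add.mp h4]
    abel
  -- pass to matrices
  set Mρ := LinearMap.toMatrix' ρ with hMρ
  set Mμ := LinearMap.toMatrix' μ with hMμ
  have hmat : Mμ * ψ = 1 - φ * Mρ := by
    have key : ∀ {T T' : Type} [Fintype T] [Fintype T'] [DecidableEq T]
        (M : Matrix T' T k), LinearMap.toMatrix' M.mulVecLin = M := by
      intro T T' _ _ _ M
      rw [← Matrix.toLin'_apply', LinearMap.toMatrix'_toLin']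
    have e1 : LinearMap.toMatrix' (μ ∘ₗ ψl) = Mμ * ψ := by
      rw [LinearMap.toMatrix'_comp, hψl, key]
    have e2 : LinearMap.toMatrix' (LinearMap.id - P) = 1 - φ * Mρ := by
      rw [show LinearMap.id - P = LinearMap.id + (-P) by abel, map_add, map_neg,
        LinearMap.toMatrix'_id, hP, LinearMap.toMatrix'_comp, hφl, key]
      abel
    rw [← e1, ← e2, hμψ]
  refine ⟨mvH Mρ v, ?_⟩
  have : mvH (φ * Mρ) v = v := by
    have h5 : (φ * Mρ) = 1 - Mμ * ψ := by rw [hmat, sub_sub_cancel]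
    rw [h5, mvH_sub_mat, mvH_one, mvH_mul, hv, mvH_zero_vec, sub_zero]
  rw [← mvH_mul]; exact this

lemma mvH_inj {T0 T1 : Type} [Fintype T0] [Fintype T1]
    (ψ : Matrix T0 T1 k)
    (hinj : ∀ v : T1 → k, ψ.mulVec v = 0 → v = 0)
    {H : Type*} [AddCommGroup H] [Module k H] (v : T1 → H) (hv : mvH ψ v = 0) :
    v = 0 := by
  classical
  set ψl := ψ.mulVecLin with hψl
  have hker : LinearMap.ker ψl = ⊥ := by
    rw [LinearMap.ker_eq_bot']
    intro m hm
    exact hinj m hm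
  obtain ⟨laml, hlam⟩ := LinearMap.exists_leftInverse_of_injective ψl hker
  have key : LinearMap.toMatrix' ψ.mulVecLin = ψ := by
    rw [← Matrix.toLin'_apply', LinearMap.toMatrix'_toLin']
  have hmat : (LinearMap.toMatrix' laml) * ψ = 1 := by
    rw [← key, ← LinearMap.toMatrix'_comp, hψl] at *
    rw [hlam, LinearMap.toMatrix'_id]
  have := congrArg (fun M => mvH M v) hmat
  simpa [mvH_mul, hv, mvH_zero_vec, mvH_one] using this.symm

end LinAlg

set_option linter.unusedSectionVars false

section EntryCalc

variable {k : Type*} [Field k] [Linear k C] [HasFiniteBiproducts C]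

variable (Q : ℤ → C) {J : ℕ → Type} [∀ i, Fintype (J i)] (d : ∀ i, J i → ℤ)
  (A : ℕ → C) (e : ∀ i, A i ≅ ⨁ fun α : J i => Q (d i α))

/-- The `(α, β)` matrix entry of a morphism `A p ⟶ A q`. -/
noncomputable def ent {p q : ℕ} (u : A p ⟶ A q) (α : J p) (β : J q) : Q (d p α) ⟶ Q (d q β) :=
  biproduct.ι (fun α : J p => Q (d p α)) α ≫ (e p).inv ≫ u ≫ (e q).hom ≫
    biproduct.π (fun β : J q => Q (d q β)) β

lemma ent_ext {p q : ℕ} {u v : A p ⟶ A q}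
    (h : ∀ α β, ent Q d A e u α β = ent Q d A e v α β) : u = v := by
  rw [← cancel_epi (e p).inv, ← cancel_mono (e q).hom]
  apply biproduct.hom_ext
  intro β
  apply biproduct.hom_ext'
  intro α
  simpa [ent] using h α β

lemma ent_comp {p q r : ℕ} (u : A p ⟶ A q) (v : A q ⟶ A r) (α : J p) (γ : J r) :
    ent Q d A e (u ≫ v) α γ = ∑ β : J q, ent Q d A e u α β ≫ ent Q d A e v β γ := by
  have : u ≫ v = u ≫ (e q).hom ≫ (∑ β : J q, biproduct.π (fun β : J q => Q (d q β)) β ≫ biproduct.ι (fun β : J q => Q (d q β)) β) ≫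
      (e q).inv ≫ v := by
    rw [biproduct.total]
    simp
  rw [ent, this]
  simp only [Preadditive.sum_comp, Preadditive.comp_sum, Category.assoc, ent]

lemma ent_id_ne {p : ℕ} {α β : J p} (h : α ≠ β) : ent Q d A e (𝟙 (A p)) α β = 0 := by
  classical
  simp [ent, biproduct.ι_π, dif_neg h]

lemma ent_id_self {p : ℕ} (α : J p) : ent Q d A e (𝟙 (A p)) α α = 𝟙 (Q (d p α)) := by
  classical
  simp [ent, biproduct.ι_π]

lemma ent_zero {p q : ℕ} (α : J p) (β : J q) : ent Q d A e (0 : A p ⟶ A q) α β = 0 := by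
  simp [ent]

lemma ent_sub {p q : ℕ} (u v : A p ⟶ A q) (α : J p) (β : J q) :
    ent Q d A e (u - v) α β = ent Q d A e u α β - ent Q d A e v α β := by
  simp [ent]

lemma ent_add {p q : ℕ} (u v : A p ⟶ A q) (α : J p) (β : J q) :
    ent Q d A e (u + v) α β = ent Q d A e u α β + ent Q d A e v α β := by
  simp [ent]

/-- Build a morphism `A p ⟶ A q` from a matrix of components. -/
noncomputable def entMk (p q : ℕ) (M : ∀ (α : J p) (β : J q), Q (d p α) ⟶ Q (d q β)) : A p ⟶ A q :=
  (e p).hom ≫ biproduct.matrix M ≫ (e q).inv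

lemma ent_entMk (p q : ℕ) (M : ∀ (α : J p) (β : J q), Q (d p α) ⟶ Q (d q β)) (α : J p)
    (β : J q) : ent Q d A e (entMk Q d A e p q M) α β = M α β := by
  simp [ent, entMk]

/-- All entries of `u` have degree shift `≥ m`. -/
def SuppGE {p q : ℕ} (m : ℕ) (u : A p ⟶ A q) : Prop :=
  ∀ (α : J p) (β : J q), d q β < d p α + m → ent Q d A e u α β = 0

lemma suppGE_mono {p q : ℕ} {m m' : ℕ} (h : m' ≤ m) {u : A p ⟶ A q}
    (hu : SuppGE Q d A e m u) : SuppGE Q d A e m' u := by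
  intro α β hd
  exact hu α β (by omega)

lemma suppGE_zero_mor {p q : ℕ} (m : ℕ) : SuppGE Q d A e m (0 : A p ⟶ A q) :=
  fun α β _ => ent_zero Q d A e α β

lemma suppGE_id {p : ℕ} : SuppGE Q d A e 0 (𝟙 (A p)) := by
  intro α β hd
  have : α ≠ β := by rintro rfl; omega
  exact ent_id_ne Q d A e this

lemma suppGE_comp {p q r : ℕ} {a b : ℕ} {u : A p ⟶ A q} {v : A q ⟶ A r}
    (hu : SuppGE Q d A e a u) (hv : SuppGE Q d A e b v) :
    SuppGE Q d A e (a + b) (u ≫ v) := by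
  intro α γ hd
  rw [ent_comp]
  apply Finset.sum_eq_zero
  intro β _
  by_cases hb : d q β < d p α + a
  · rw [hu α β hb, zero_comp]
  · have : d r γ < d q β + b := by push_cast at hd ⊢; omega
    rw [hv β γ this, comp_zero]

lemma suppGE_sub {p q : ℕ} {m : ℕ} {u v : A p ⟶ A q} (hu : SuppGE Q d A e m u)
    (hv : SuppGE Q d A e m v) : SuppGE Q d A e m (u - v) := by
  intro α β hd
  rw [ent_sub, hu α β hd, hv α β hd, sub_zero]

lemma exists_suppBound (p q : ℕ) : ∃ M : ℕ, ∀ (α : J p) (β : J q), d q β < d p α + M := by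
  classical
  refine ⟨(Finset.univ.sup fun x : J p × J q => (d q x.2 - d p x.1).toNat) + 1, ?_⟩
  intro α β
  have h1 : d q β - d p α ≤ ((d q β - d p α).toNat : ℤ) := Int.self_le_toNat _
  have h2 : (d q β - d p α).toNat ≤
      Finset.univ.sup fun x : J p × J q => (d q x.2 - d p x.1).toNat :=
    Finset.le_sup (f := fun x : J p × J q => (d q x.2 - d p x.1).toNat) (Finset.mem_univ (α, β))
  push_cast
  omega

lemma eq_zero_of_suppGE {p q : ℕ} {M : ℕ} (hM : ∀ (α : J p) (β : J q), d q β < d p α + M)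
    {u : A p ⟶ A q} (hu : SuppGE Q d A e M u) : u = 0 := by
  apply ent_ext Q d A e
  intro α β
  rw [hu α β (hM α β), ent_zero Q d A e]

end EntryCalc

section Solve

variable {k : Type*} [Field k] [Linear k C] [HasFiniteBiproducts C]

variable (Q : ℤ → C) {J : ℕ → Type} [∀ i, Fintype (J i)] (d : ∀ i, J i → ℤ)
  (A : ℕ → C) (e : ∀ i, A i ≅ ⨁ fun α : J i => Q (d i α))
  (n : ℕ) (f : ∀ i : ℕ, A (i + 1) ⟶ A i) (c : ∀ i, J i → J (i + 1) → k)

/-- sum over a full index type localizes to a degree subtype when terms vanish off it -/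
lemma sum_subtype_deg {q : ℕ} {jd : ℤ} {M : Type*} [AddCommMonoid M] (F : J q → M)
    (hF : ∀ β, d q β ≠ jd → F β = 0) :
    ∑ β : J q, F β = ∑ β : {β : J q // d q β = jd}, F β.1 := by
  classical
  rw [← Finset.sum_filter_of_ne (s := Finset.univ) (p := fun β => d q β = jd)
    (fun β _ h => by by_contra hne; exact h (hF β hne))]
  rw [Finset.sum_subtype (p := fun β => d q β = jd)
    (Finset.univ.filter fun β => d q β = jd) (by intro x; simp) F]

/-- the scalar matrix of the degree-`jd` part of the differential -/
def cmat (i : ℕ) (jd : ℤ) :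
    Matrix {β : J i // d i β = jd} {γ : J (i + 1) // d (i + 1) γ = jd} k :=
  fun β γ => c i β.1 γ.1

lemma cmat_mulVec (i : ℕ) (jd : ℤ) (v : {γ : J (i + 1) // d (i + 1) γ = jd} → k) :
    (cmat (J := J) d c i jd).mulVec v = scalarMap d c i jd v := by
  funext β
  simp [cmat, Matrix.mulVec, dotProduct, scalarMap]

section WithHyp

variable (hcx : ∀ i : ℕ, i + 1 < n → f (i + 1) ≫ f i = 0)
  (hlow : ∀ i : ℕ, i < n → ∀ (α : J (i + 1)) (β : J i), d i β < d (i + 1) α →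
    ent Q d A e (f i) α β = 0)
  (hdiag : ∀ i : ℕ, i < n → ∀ (α : J (i + 1)) (β : J i) (hd : d (i + 1) α = d i β),
    ent Q d A e (f i) α β = c i β α • eqToHom (congrArg Q hd))
  (hex_mid : ∀ i : ℕ, i + 1 < n → ∀ (j : ℤ) (v : {α : J (i + 1) // d (i + 1) α = j} → k),
    scalarMap d c i j v = 0 → ∃ w, scalarMap d c (i + 1) j w = v)
  (hex_top : ∀ i : ℕ, i + 1 = n → ∀ (j : ℤ) (v : {α : J (i + 1) // d (i + 1) α = j} → k),
    scalarMap d c i j v = 0 → v = 0)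
  (hex_bot : 0 < n → ∀ (j : ℤ) (w : {β : J 0 // d 0 β = j} → k),
    ∃ v, scalarMap d c 0 j v = w)

include hlow in
lemma suppGE_f (i : ℕ) (hi : i < n) : SuppGE Q d A e 0 (f i) := by
  intro α β hlt
  exact hlow i hi α β (by push_cast at hlt; omega)

include hlow hdiag in
/-- the key row computation: if `u ≫ f j = 0` and `u` is supported in shifts `≥ m`, then the
shift-`m` rows of `u` are killed by the scalar matrix `c j`. -/
lemma row_ker (j : ℕ) (hjn : j < n) (u : A (j + 1) ⟶ A (j + 1)) (hu : u ≫ f j = 0)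
    (m : ℕ) (hm : SuppGE Q d A e m u) (α : J (j + 1))
    (γ : {γ : J j // d j γ = d (j + 1) α + m}) :
    ∑ β : {β : J (j + 1) // d (j + 1) β = d (j + 1) α + m},
      c j γ.1 β.1 • (ent Q d A e u α β.1 ≫ eqToHom (congrArg Q β.2)) = 0 := by
  classical
  have h0 : ent Q d A e (u ≫ f j) α γ.1 = 0 := by rw [hu]; exact ent_zero Q d A e α γ.1
  rw [ent_comp] at h0
  rw [sum_subtype_deg d (jd := d (j + 1) α + m)
    (F := fun β => ent Q d A e u α β ≫ ent Q d A e (f j) β γ.1) (by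
      intro β hne
      show ent Q d A e u α β ≫ ent Q d A e (f j) β γ.1 = 0
      rcases lt_or_gt_of_ne hne with hlt | hgt
      · rw [hm α β (by push_cast; omega), zero_comp]
      · rw [hlow j hjn β γ.1 (by omega), comp_zero])] at h0
  have hterm : ∀ β : {β : J (j + 1) // d (j + 1) β = d (j + 1) α + m},
      c j γ.1 β.1 • (ent Q d A e u α β.1 ≫ eqToHom (congrArg Q β.2))
      = (ent Q d A e u α β.1 ≫ ent Q d A e (f j) β.1 γ.1) ≫ eqToHom (congrArg Q γ.2) := by
    intro β
    have hd : d (j + 1) β.1 = d j γ.1 := β.2.trans γ.2.symm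
    rw [hdiag j hjn β.1 γ.1 hd]
    simp [Linear.comp_smul, Linear.smul_comp, eqToHom_trans]
  calc ∑ β : {β : J (j + 1) // d (j + 1) β = d (j + 1) α + m},
        c j γ.1 β.1 • (ent Q d A e u α β.1 ≫ eqToHom (congrArg Q β.2))
      = ∑ β : {β : J (j + 1) // d (j + 1) β = d (j + 1) α + m},
        (ent Q d A e u α β.1 ≫ ent Q d A e (f j) β.1 γ.1) ≫ eqToHom (congrArg Q γ.2) :=
        Finset.sum_congr rfl (fun β _ => hterm β)
    _ = (∑ β : {β : J (j + 1) // d (j + 1) β = d (j + 1) α + m},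
        ent Q d A e u α β.1 ≫ ent Q d A e (f j) β.1 γ.1) ≫ eqToHom (congrArg Q γ.2) := by
        rw [Preadditive.sum_comp]
    _ = 0 := by rw [h0, zero_comp]

include hex_mid in
/-- `H`-valued lifting through the scalar complex, middle case. -/
lemma hlift_mid (j : ℕ) (hjn : j + 1 < n) (jd : ℤ) {H : Type*} [AddCommGroup H] [Module k H]
    (v : {β : J (j + 1) // d (j + 1) β = jd} → H)
    (hv : ∀ γ : {γ : J j // d j γ = jd}, ∑ β, c j γ.1 β.1 • v β = 0) :
    ∃ w : {γ : J (j + 2) // d (j + 2) γ = jd} → H, ∀ β, ∑ γ, c (j + 1) β.1 γ.1 • w γ = v β := by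
  obtain ⟨w, hw⟩ := mvH_lift (cmat (J := J) d c j jd) (cmat (J := J) d c (j + 1) jd)
    (fun v0 hv0 => by
      obtain ⟨w0, hw0⟩ := hex_mid j hjn jd v0 (by rw [← cmat_mulVec]; exact hv0)
      exact ⟨w0, by rw [cmat_mulVec]; exact hw0⟩)
    v (by funext γ; exact hv γ)
  exact ⟨w, fun β => congrFun hw β⟩

include hex_bot in
/-- `H`-valued lifting, bottom case (surjectivity). -/
lemma hlift_bot (hn : 0 < n) (jd : ℤ) {H : Type*} [AddCommGroup H] [Module k H]
    (v : {β : J 0 // d 0 β = jd} → H) :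
    ∃ w : {γ : J 1 // d 1 γ = jd} → H, ∀ β, ∑ γ, c 0 β.1 γ.1 • w γ = v β := by
  obtain ⟨w, hw⟩ := mvH_lift (0 : Matrix PEmpty {β : J 0 // d 0 β = jd} k)
    (cmat (J := J) d c 0 jd)
    (fun v0 _ => by
      obtain ⟨w0, hw0⟩ := hex_bot hn jd v0
      exact ⟨w0, by rw [cmat_mulVec]; exact hw0⟩)
    v (by funext γ; exact γ.elim)
  exact ⟨w, fun β => congrFun hw β⟩

include hex_top in
/-- `H`-valued injectivity, top case. -/
lemma hinj_top (j : ℕ) (hjn : j + 1 = n) (jd : ℤ) {H : Type*} [AddCommGroup H] [Module k H]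
    (v : {β : J (j + 1) // d (j + 1) β = jd} → H)
    (hv : ∀ γ : {γ : J j // d j γ = jd}, ∑ β, c j γ.1 β.1 • v β = 0) : v = 0 := by
  exact mvH_inj (cmat (J := J) d c j jd)
    (fun v0 hv0 => hex_top j hjn jd v0 (by rw [← cmat_mulVec]; exact hv0))
    v (by funext γ; exact hv γ)

end WithHyp

end Solve

section Solve2

variable {k : Type*} [Field k] [Linear k C] [HasFiniteBiproducts C]

variable (Q : ℤ → C) {J : ℕ → Type} [∀ i, Fintype (J i)] (d : ∀ i, J i → ℤ)
  (A : ℕ → C) (e : ∀ i, A i ≅ ⨁ fun α : J i => Q (d i α))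
  (n : ℕ) (f : ∀ i : ℕ, A (i + 1) ⟶ A i) (c : ∀ i, J i → J (i + 1) → k)

variable (hlow : ∀ i : ℕ, i < n → ∀ (α : J (i + 1)) (β : J i), d i β < d (i + 1) α →
    ent Q d A e (f i) α β = 0)
  (hdiag : ∀ i : ℕ, i < n → ∀ (α : J (i + 1)) (β : J i) (hd : d (i + 1) α = d i β),
    ent Q d A e (f i) α β = c i β α • eqToHom (congrArg Q hd))

include hlow hdiag in
lemma solveGen (i : ℕ) (hin : i < n) (P : A i ⟶ A i) (hP : SuppGE Q d A e 0 P)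
    (hlift : ∀ (m : ℕ) (E : A i ⟶ A i), SuppGE Q d A e m E → (∃ t, E = P - t ≫ f i) →
      ∀ α : J i, ∃ w : {γ : J (i + 1) // d (i + 1) γ = d i α + m} →
          (Q (d i α) ⟶ Q (d i α + m)),
        ∀ β : {β : J i // d i β = d i α + m},
          ∑ γ, c i β.1 γ.1 • w γ = ent Q d A e E α β.1 ≫ eqToHom (congrArg Q β.2)) :
    ∃ t : A i ⟶ A (i + 1), SuppGE Q d A e 0 t ∧ t ≫ f i = P := by
  classical
  have claim : ∀ m : ℕ, ∃ t : A i ⟶ A (i + 1), SuppGE Q d A e 0 t ∧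
      SuppGE Q d A e m (P - t ≫ f i) := by
    intro m
    induction m with
    | zero => exact ⟨0, suppGE_zero_mor Q d A e 0, by simpa using hP⟩
    | succ m ih =>
      obtain ⟨t, h1, h2⟩ := ih
      choose w hw using hlift m (P - t ≫ f i) h2 ⟨t, rfl⟩
      set Δ : A i ⟶ A (i + 1) := entMk Q d A e i (i + 1) (fun α γ =>
        if hg : d (i + 1) γ = d i α + m then w α ⟨γ, hg⟩ ≫ eqToHom (congrArg Q hg.symm)
        else 0) with hΔ
      refine ⟨t + Δ, ?_, ?_⟩
      · intro α γ hd
        rw [ent_add, h1 α γ hd, ent_entMk, zero_add, dif_neg (by omega)]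
      · intro α β hd
        have hsplit : P - (t + Δ) ≫ f i = (P - t ≫ f i) - Δ ≫ f i := by
          rw [Preadditive.add_comp]; abel
        rw [hsplit, ent_sub, ent_comp]
        by_cases hcase : d i β < d i α + m
        · rw [h2 α β hcase, Finset.sum_eq_zero, sub_zero]
          intro γ _
          rw [ent_entMk]
          by_cases hg : d (i + 1) γ = d i α + m
          · rw [dif_pos hg, hlow i hin γ β (by omega), comp_zero]
          · rw [dif_neg hg, zero_comp]
        · have hβ : d i β = d i α + m := by omega
          rw [sum_subtype_deg (d := d) (jd := d i α + m)
            (F := fun γ => ent Q d A e Δ α γ ≫ ent Q d A e (f i) γ β) (by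
              intro γ hne
              show ent Q d A e Δ α γ ≫ ent Q d A e (f i) γ β = 0
              rw [ent_entMk, dif_neg hne, zero_comp])]
          have hterm : ∀ γ : {γ : J (i + 1) // d (i + 1) γ = d i α + m},
              ent Q d A e Δ α γ.1 ≫ ent Q d A e (f i) γ.1 β
              = (c i β γ.1 • w α γ) ≫ eqToHom (congrArg Q hβ.symm) := by
            intro γ
            have hd2 : d (i + 1) γ.1 = d i β := γ.2.trans hβ.symm
            rw [ent_entMk, dif_pos γ.2, hdiag i hin γ.1 β hd2]
            simp [Linear.comp_smul, Linear.smul_comp, eqToHom_trans]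
          rw [Finset.sum_congr rfl (fun γ _ => hterm γ), ← Preadditive.sum_comp,
            hw α ⟨β, hβ⟩]
          simp [eqToHom_trans]
  obtain ⟨M, hM⟩ := exists_suppBound (J := J) (d := d) i i
  obtain ⟨t, ht0, htM⟩ := claim M
  exact ⟨t, ht0, (sub_eq_zero.mp (eq_zero_of_suppGE Q d A e hM htM)).symm⟩

end Solve2

section Contraction

variable {k : Type*} [Field k] [Linear k C] [HasFiniteBiproducts C]

variable (Q : ℤ → C) {J : ℕ → Type} [∀ i, Fintype (J i)] (d : ∀ i, J i → ℤ)
  (A : ℕ → C) (e : ∀ i, A i ≅ ⨁ fun α : J i => Q (d i α))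
  (n : ℕ) (f : ∀ i : ℕ, A (i + 1) ⟶ A i) (c : ∀ i, J i → J (i + 1) → k)
  (hcx : ∀ i : ℕ, i + 1 < n → f (i + 1) ≫ f i = 0)
  (hlow : ∀ i : ℕ, i < n → ∀ (α : J (i + 1)) (β : J i), d i β < d (i + 1) α →
    ent Q d A e (f i) α β = 0)
  (hdiag : ∀ i : ℕ, i < n → ∀ (α : J (i + 1)) (β : J i) (hd : d (i + 1) α = d i β),
    ent Q d A e (f i) α β = c i β α • eqToHom (congrArg Q hd))
  (hex_mid : ∀ i : ℕ, i + 1 < n → ∀ (j : ℤ) (v : {α : J (i + 1) // d (i + 1) α = j} → k),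
    scalarMap d c i j v = 0 → ∃ w, scalarMap d c (i + 1) j w = v)
  (hex_top : ∀ i : ℕ, i + 1 = n → ∀ (j : ℤ) (v : {α : J (i + 1) // d (i + 1) α = j} → k),
    scalarMap d c i j v = 0 → v = 0)
  (hex_bot : 0 < n → ∀ (j : ℤ) (w : {β : J 0 // d 0 β = j} → k),
    ∃ v, scalarMap d c 0 j v = w)

include hlow hdiag hex_bot in
lemma solve0 (hn : 0 < n) (P : A 0 ⟶ A 0) (hP : SuppGE Q d A e 0 P) :
    ∃ t : A 0 ⟶ A 1, SuppGE Q d A e 0 t ∧ t ≫ f 0 = P := by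
  refine solveGen Q d A e n f c hlow hdiag 0 hn P hP ?_
  intro m E _ _ α
  exact hlift_bot (d := d) (n := n) (c := c) hex_bot hn (d 0 α + m)
    (fun β => ent Q d A e E α β.1 ≫ eqToHom (congrArg Q β.2))

include hcx hlow hdiag hex_mid in
lemma solveS (j : ℕ) (hjn : j + 1 < n) (P : A (j + 1) ⟶ A (j + 1))
    (hP : SuppGE Q d A e 0 P) (hker : P ≫ f j = 0) :
    ∃ t : A (j + 1) ⟶ A (j + 2), SuppGE Q d A e 0 t ∧ t ≫ f (j + 1) = P := by
  refine solveGen Q d A e n f c hlow hdiag (j + 1) hjn P hP ?_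
  intro m E hm hEform α
  obtain ⟨t, rfl⟩ := hEform
  have hE : (P - t ≫ f (j + 1)) ≫ f j = 0 := by
    rw [Preadditive.sub_comp, hker, Category.assoc, hcx j hjn, comp_zero, sub_zero]
  exact hlift_mid (d := d) (n := n) (c := c) hex_mid j hjn (d (j + 1) α + m)
    (fun β => ent Q d A e (P - t ≫ f (j + 1)) α β.1 ≫ eqToHom (congrArg Q β.2))
    (fun γ => row_ker Q d A e n f c hlow hdiag j (by omega) _ hE m hm α γ)

include hlow hdiag hex_top in
lemma vanish (j : ℕ) (hj : j + 1 = n) (u : A (j + 1) ⟶ A (j + 1))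
    (h0 : SuppGE Q d A e 0 u) (hker : u ≫ f j = 0) : u = 0 := by
  have hall : ∀ m : ℕ, SuppGE Q d A e m u := by
    intro m
    induction m with
    | zero => exact h0
    | succ m ih =>
      intro α β hd
      by_cases hcase : d (j + 1) β < d (j + 1) α + m
      · exact ih α β hcase
      · have hβ : d (j + 1) β = d (j + 1) α + m := by omega
        have hv := hinj_top (d := d) (n := n) (c := c) hex_top j hj (d (j + 1) α + m)
          (fun β' => ent Q d A e u α β'.1 ≫ eqToHom (congrArg Q β'.2))
          (fun γ => row_ker Q d A e n f c hlow hdiag j (by omega) u hker m ih α γ)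
        have := congrFun hv ⟨β, hβ⟩
        simp only [Pi.zero_apply] at this
        have h2 := congrArg (fun z => z ≫ eqToHom (congrArg Q hβ.symm)) this
        simpa [eqToHom_trans] using h2
  obtain ⟨M, hM⟩ := exists_suppBound (J := J) (d := d) (j + 1) (j + 1)
  exact eq_zero_of_suppGE Q d A e hM (hall M)


end Contraction

section Contraction2

variable {k : Type*} [Field k] [Linear k C] [HasFiniteBiproducts C]

variable (Q : ℤ → C) {J : ℕ → Type} [∀ i, Fintype (J i)] (d : ∀ i, J i → ℤ)
  (A : ℕ → C) (e : ∀ i, A i ≅ ⨁ fun α : J i => Q (d i α))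
  (n : ℕ) (f : ∀ i : ℕ, A (i + 1) ⟶ A i) (c : ∀ i, J i → J (i + 1) → k)
  (hcx : ∀ i : ℕ, i + 1 < n → f (i + 1) ≫ f i = 0)
  (hlow : ∀ i : ℕ, i < n → ∀ (α : J (i + 1)) (β : J i), d i β < d (i + 1) α →
    ent Q d A e (f i) α β = 0)
  (hdiag : ∀ i : ℕ, i < n → ∀ (α : J (i + 1)) (β : J i) (hd : d (i + 1) α = d i β),
    ent Q d A e (f i) α β = c i β α • eqToHom (congrArg Q hd))
  (hex_mid : ∀ i : ℕ, i + 1 < n → ∀ (j : ℤ) (v : {α : J (i + 1) // d (i + 1) α = j} → k),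
    scalarMap d c i j v = 0 → ∃ w, scalarMap d c (i + 1) j w = v)
  (hex_top : ∀ i : ℕ, i + 1 = n → ∀ (j : ℤ) (v : {α : J (i + 1) // d (i + 1) α = j} → k),
    scalarMap d c i j v = 0 → v = 0)
  (hex_bot : 0 < n → ∀ (j : ℤ) (w : {β : J 0 // d 0 β = j} → k),
    ∃ v, scalarMap d c 0 j v = w)

noncomputable def conAux : ∀ i : ℕ, Σ' (pc : A i ⟶ A i) (t : A i ⟶ A (i + 1)),
    (i < n → SuppGE Q d A e 0 pc ∧ SuppGE Q d A e 0 t ∧ t ≫ f i = 𝟙 (A i) - pc ∧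
      f i ≫ pc = 0)
  | 0 =>
    if hn : 0 < n then
      let sol := solve0 Q d A e n f c hlow hdiag hex_bot hn (𝟙 (A 0)) (suppGE_id Q d A e)
      ⟨0, sol.choose, fun _ => ⟨suppGE_zero_mor Q d A e 0, sol.choose_spec.1,
        by rw [sol.choose_spec.2, sub_zero], by rw [comp_zero]⟩⟩
    else ⟨0, 0, fun h => absurd h hn⟩
  | (j + 1) =>
    if hn : j + 1 < n then
      let prev := conAux j
      have hprev := prev.2.2 (by omega)
      have hP : SuppGE Q d A e 0 (𝟙 (A (j + 1)) - f j ≫ prev.2.1) :=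
        suppGE_sub Q d A e (suppGE_id Q d A e)
          (suppGE_comp Q d A e (a := 0) (b := 0)
            (suppGE_f Q d A e n f hlow j (by omega)) hprev.2.1)
      have hker : (𝟙 (A (j + 1)) - f j ≫ prev.2.1) ≫ f j = 0 := by
        rw [Preadditive.sub_comp, Category.id_comp, Category.assoc, hprev.2.2.1,
          Preadditive.comp_sub, Category.comp_id, hprev.2.2.2]
        simp
      let sol := solveS Q d A e n f c hcx hlow hdiag hex_mid j hn _ hP hker
      ⟨f j ≫ prev.2.1, sol.choose, fun _ =>
        ⟨suppGE_comp Q d A e (a := 0) (b := 0)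
            (suppGE_f Q d A e n f hlow j (by omega)) hprev.2.1, sol.choose_spec.1,
          sol.choose_spec.2, by rw [← Category.assoc, hcx j hn, zero_comp]⟩⟩
    else ⟨f j ≫ (conAux j).2.1, 0, fun h => absurd h hn⟩

lemma conAux_zero_pc :
    (conAux Q d A e n f c hcx hlow hdiag hex_mid hex_bot 0).1 = 0 := by
  conv_lhs => rw [conAux]
  split <;> rfl

lemma conAux_succ_pc (j : ℕ) :
    (conAux Q d A e n f c hcx hlow hdiag hex_mid hex_bot (j + 1)).1 =
      f j ≫ (conAux Q d A e n f c hcx hlow hdiag hex_mid hex_bot j).2.1 := by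
  conv_lhs => rw [conAux]
  split <;> rfl

include hcx hlow hdiag hex_mid hex_top hex_bot in
lemma contraction_exists : ∃ s : ∀ i : ℕ, A i ⟶ A (i + 1),
    (0 < n → s 0 ≫ f 0 = 𝟙 (A 0)) ∧
    (∀ i : ℕ, i + 1 < n → s (i + 1) ≫ f (i + 1) = 𝟙 (A (i + 1)) - f i ≫ s i) ∧
    (∀ i : ℕ, i + 1 = n → f i ≫ s i = 𝟙 (A (i + 1))) := by
  refine ⟨fun i => (conAux Q d A e n f c hcx hlow hdiag hex_mid hex_bot i).2.1, ?_, ?_, ?_⟩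
  · intro hn
    have h := ((conAux Q d A e n f c hcx hlow hdiag hex_mid hex_bot 0).2.2 hn).2.2.1
    simp only [conAux_zero_pc Q d A e n f c hcx hlow hdiag hex_mid hex_bot, sub_zero] at h
    exact h
  · intro i hi
    have h := ((conAux Q d A e n f c hcx hlow hdiag hex_mid hex_bot (i + 1)).2.2 hi).2.2.1
    simp only [conAux_succ_pc Q d A e n f c hcx hlow hdiag hex_mid hex_bot i] at h
    exact h
  · intro i hi
    have hi' : i < n := by omega
    have hprev := (conAux Q d A e n f c hcx hlow hdiag hex_mid hex_bot i).2.2 hi'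
    have hu0 : SuppGE Q d A e 0 (𝟙 (A (i + 1)) -
        f i ≫ (conAux Q d A e n f c hcx hlow hdiag hex_mid hex_bot i).2.1) :=
      suppGE_sub Q d A e (suppGE_id Q d A e)
        (suppGE_comp Q d A e (a := 0) (b := 0)
          (suppGE_f Q d A e n f hlow i hi') hprev.2.1)
    have huk : (𝟙 (A (i + 1)) -
        f i ≫ (conAux Q d A e n f c hcx hlow hdiag hex_mid hex_bot i).2.1) ≫ f i = 0 := by
      rw [Preadditive.sub_comp, Category.id_comp, Category.assoc, hprev.2.2.1,
        Preadditive.comp_sub, Category.comp_id, hprev.2.2.2]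
      simp
    have := vanish Q d A e n f c hlow hdiag hex_top i hi _ hu0 huk
    have h2 := sub_eq_zero.mp this
    exact h2.symm

end Contraction2

section Triangulated


lemma isZero_of_shift_isZero (X : C) (a : ℤ) (h : IsZero ((shiftFunctor C a).obj X)) :
    IsZero X := by
  have h2 : IsZero ((shiftFunctor C (-a)).obj ((shiftFunctor C a).obj X)) :=
    (shiftFunctor C (-a)).map_isZero h
  exact h2.of_iso ((shiftFunctorCompIsoId C a (-a) (by ring)).symm.app X)

variable (n : ℕ) (A : ℕ → C) (f : ∀ i : ℕ, A (i + 1) ⟶ A i)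

section WithContraction

variable (s : ∀ i : ℕ, A i ⟶ A (i + 1))
  (K1 : 0 < n → s 0 ≫ f 0 = 𝟙 (A 0))
  (K2 : ∀ i : ℕ, i + 1 < n → s (i + 1) ≫ f (i + 1) = 𝟙 (A (i + 1)) - f i ≫ s i)
  (K3 : ∀ i : ℕ, i + 1 = n → f i ≫ s i = 𝟙 (A (i + 1)))

include K1 K2 K3 in
/-- uniqueness: any Postnikov system of a strongly contractible complex ends at a zero
object. -/
lemma postnikov_isZero (hn : 0 < n) (P : PostnikovSystem n A f) : IsZero (P.B n) := by
  have inv : ∀ i : ℕ, i ≤ n → (∃ r, P.g i ≫ r = 𝟙 _) ∧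
      (∀ hi : i < n, P.g i ≫ (s i ≫ f i) = P.g i) := by
    intro i
    induction i with
    | zero =>
      intro _
      have := P.g0_isIso
      refine ⟨⟨inv (P.g 0), by simp⟩, fun h0 => by rw [K1 h0, Category.comp_id]⟩
    | succ i ih =>
      intro hin
      have hi : i < n := by omega
      obtain ⟨⟨r, hr⟩, hc⟩ := ih (by omega)
      obtain ⟨dd, hT⟩ := P.tri i hi
      have hmono : Mono (P.g i) := by
        have : Mono (P.g i ≫ r) := by rw [hr]; infer_instance
        exact mono_of_mono (P.g i) r
      have hσ : (P.g i ≫ s i) ≫ P.h i = 𝟙 _ := by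
        have h1 : ((P.g i ≫ s i) ≫ P.h i) ≫ P.g i = 𝟙 _ ≫ P.g i := by
          rw [Category.assoc, Category.assoc, P.comm i hi, Category.id_comp]
          exact hc hi
        exact (cancel_mono (P.g i)).1 h1
      have hd0 : dd = 0 := by
        have h2 : P.h i ≫ dd = 0 := comp_distTriang_mor_zero₂₃ _ hT
        calc dd = ((P.g i ≫ s i) ≫ P.h i) ≫ dd := by rw [hσ, Category.id_comp]
          _ = (P.g i ≫ s i) ≫ P.h i ≫ dd := by rw [Category.assoc]
          _ = 0 := by rw [h2, comp_zero]
      obtain ⟨eiso, he1, he2⟩ := exists_iso_binaryBiproduct_of_distTriang _ hT hd0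
      dsimp [Triangle.mk] at eiso he1 he2
      constructor
      · exact ⟨eiso.hom ≫ biprod.fst, by rw [← Category.assoc, he1]; exact biprod.inl_fst⟩
      · intro hi'
        rw [K2 i hi', Preadditive.comp_sub, Category.comp_id]
        have hgh : P.g (i + 1) ≫ P.h i = 0 := comp_distTriang_mor_zero₁₂ _ hT
        have hgf : P.g (i + 1) ≫ f i = 0 := by
          rw [← P.comm i hi, ← Category.assoc, hgh, zero_comp]
        rw [← Category.assoc, hgf, zero_comp, sub_zero]
  obtain ⟨m, rfl⟩ : ∃ m, n = m + 1 := ⟨n - 1, by omega⟩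
  obtain ⟨⟨r, hr⟩, -⟩ := inv (m + 1) le_rfl
  have hm : m < m + 1 := by omega
  obtain ⟨dd, hT⟩ := P.tri m hm
  have hgh : P.g (m + 1) ≫ P.h m = 0 := comp_distTriang_mor_zero₁₂ _ hT
  have hgf : P.g (m + 1) ≫ f m = 0 := by
    rw [← P.comm m hm, ← Category.assoc, hgh, zero_comp]
  have hid : 𝟙 ((shiftFunctor C (-((m + 1 : ℕ) : ℤ))).obj (P.B (m + 1))) = 0 := by
    rw [← hr]
    conv_lhs => rw [show P.g (m + 1) = (P.g (m + 1) ≫ f m) ≫ s m by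
      rw [Category.assoc, K3 m rfl, Category.comp_id]]
    rw [hgf, zero_comp, zero_comp]
  exact isZero_of_shift_isZero _ _ ((IsZero.iff_id_eq_zero _).2 hid)

end WithContraction

end Triangulated

section Existence

variable (n : ℕ) (A : ℕ → C) (f : ∀ i : ℕ, A (i + 1) ⟶ A i) (s : ∀ i : ℕ, A i ⟶ A (i + 1))

/-- data of one stage of a Postnikov system construction -/
structure StageData (i : ℕ) where
  B : C
  g : (shiftFunctor C (-(i : ℤ))).obj B ⟶ A i
  r : A i ⟶ (shiftFunctor C (-(i : ℤ))).obj B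
  gr : g ≫ r = 𝟙 _
  iso0 : i = 0 → IsIso g
  fb : i < n → f i ≫ r ≫ g = f i
  gc : ∀ _ : i < n, g ≫ (s i ≫ f i) = g

variable (K1 : 0 < n → s 0 ≫ f 0 = 𝟙 (A 0))
  (K2 : ∀ i : ℕ, i + 1 < n → s (i + 1) ≫ f (i + 1) = 𝟙 (A (i + 1)) - f i ≫ s i)
  (hcx : ∀ i : ℕ, i + 1 < n → f (i + 1) ≫ f i = 0)

noncomputable def baseStage : StageData n A f s 0 where
  B := (shiftFunctor C ((0 : ℕ) : ℤ)).obj (A 0)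
  g := (shiftFunctorCompIsoId C ((0 : ℕ) : ℤ) (-((0 : ℕ) : ℤ)) (by simp)).hom.app (A 0)
  r := (shiftFunctorCompIsoId C ((0 : ℕ) : ℤ) (-((0 : ℕ) : ℤ)) (by simp)).inv.app (A 0)
  gr := by rw [Iso.hom_inv_id_app]; rfl
  iso0 := fun _ => inferInstance
  fb := fun _ => by rw [Iso.inv_hom_id_app]; exact Category.comp_id _
  gc := fun hi => by rw [K1 hi]; exact Category.comp_id _

noncomputable def trivStage (i : ℕ) (hni : ¬ i < n) : StageData n A f s i where
  B := (shiftFunctor C (i : ℤ)).obj (A i)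
  g := (shiftFunctorCompIsoId C (i : ℤ) (-(i : ℤ)) (by simp)).hom.app (A i)
  r := (shiftFunctorCompIsoId C (i : ℤ) (-(i : ℤ)) (by simp)).inv.app (A i)
  gr := by rw [Iso.hom_inv_id_app]; rfl
  iso0 := fun _ => inferInstance
  fb := fun h => absurd h hni
  gc := fun h => absurd h hni

include K2 hcx in
lemma stepEx (i : ℕ) (hi : i < n) (S : StageData n A f s i) :
    ∃ S' : StageData n A f s (i + 1),
      ∃ dd, Triangle.mk S'.g (f i ≫ S.r) dd ∈ distTriang C := by
  obtain ⟨W, g0, δ, hTd⟩ := distinguished_cocone_triangle₁ (f i ≫ S.r)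
  set ciso := (shiftFunctorCompIsoId C ((i + 1 : ℕ) : ℤ) (-((i + 1 : ℕ) : ℤ)) (by omega)).app W
    with hciso
  have hT2 : Triangle.mk (ciso.hom ≫ g0) (f i ≫ S.r)
      (δ ≫ (shiftFunctor C (1 : ℤ)).map ciso.inv) ∈ distTriang C := by
    refine isomorphic_distinguished _ hTd _ ?_
    refine Triangle.isoMk _ _ ciso (Iso.refl _) (Iso.refl _) ?_ ?_ ?_ <;>
      simp [Triangle.mk, ← Functor.map_comp]
  have hσ : (S.g ≫ s i) ≫ (f i ≫ S.r) = 𝟙 _ := by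
    calc (S.g ≫ s i) ≫ f i ≫ S.r = (S.g ≫ (s i ≫ f i)) ≫ S.r := by
          simp only [Category.assoc]
      _ = S.g ≫ S.r := by rw [S.gc hi]
      _ = 𝟙 _ := S.gr
  have hzero : δ ≫ (shiftFunctor C (1 : ℤ)).map ciso.inv = 0 := by
    have h2 := comp_distTriang_mor_zero₂₃ _ hT2
    dsimp [Triangle.mk] at h2
    calc δ ≫ (shiftFunctor C (1 : ℤ)).map ciso.inv
        = ((S.g ≫ s i) ≫ (f i ≫ S.r)) ≫ (δ ≫ (shiftFunctor C (1 : ℤ)).map ciso.inv) := by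
          rw [hσ, Category.id_comp]
      _ = (S.g ≫ s i) ≫ ((f i ≫ S.r) ≫ (δ ≫ (shiftFunctor C (1 : ℤ)).map ciso.inv)) := by
          simp only [Category.assoc]
      _ = 0 := by rw [h2]; exact comp_zero
  obtain ⟨eiso, he1, he2⟩ := exists_iso_binaryBiproduct_of_distTriang _ hT2 hzero
  dsimp [Triangle.mk] at eiso he1 he2
  have hg' : ciso.hom ≫ g0 = biprod.inl ≫ eiso.inv := by
    rw [← he1, Category.assoc, Iso.hom_inv_id, Category.comp_id]
  have hsnd : eiso.hom ≫ biprod.snd = f i ≫ S.r := he2.symm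
  have hrg : (eiso.hom ≫ biprod.fst) ≫ (ciso.hom ≫ g0) =
      𝟙 (A (i + 1)) - (f i ≫ S.r) ≫ (biprod.inr ≫ eiso.inv) := by
    rw [hg']
    have hsplit : (biprod.fst ≫ biprod.inl :
        ((shiftFunctor C (-((i + 1 : ℕ) : ℤ))).obj ((shiftFunctor C ((i + 1 : ℕ) : ℤ)).obj W)) ⊞
          ((shiftFunctor C (-(i : ℤ))).obj S.B) ⟶ _) =
        𝟙 _ - biprod.snd ≫ biprod.inr := by
      rw [← biprod.total, add_sub_cancel_right]
    calc (eiso.hom ≫ biprod.fst) ≫ biprod.inl ≫ eiso.inv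
        = eiso.hom ≫ (biprod.fst ≫ biprod.inl) ≫ eiso.inv := by
          simp only [Category.assoc]
      _ = eiso.hom ≫ (𝟙 _ - biprod.snd ≫ biprod.inr) ≫ eiso.inv := by exact congrArg (fun x => eiso.hom ≫ x ≫ eiso.inv) hsplit
      _ = eiso.hom ≫ eiso.inv - (eiso.hom ≫ biprod.snd) ≫ (biprod.inr ≫ eiso.inv) := by
          simp [Preadditive.sub_comp, Preadditive.comp_sub, Category.assoc]
      _ = 𝟙 (A (i + 1)) - (f i ≫ S.r) ≫ (biprod.inr ≫ eiso.inv) := by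
          rw [Iso.hom_inv_id, hsnd]
  have hgh0 : (ciso.hom ≫ g0) ≫ (f i ≫ S.r) = 0 := comp_distTriang_mor_zero₁₂ _ hT2
  have hgf0 : (ciso.hom ≫ g0) ≫ f i = 0 := by
    have hf : f i = (f i ≫ S.r) ≫ S.g := by
      rw [Category.assoc, S.fb hi]
    rw [hf, ← Category.assoc, hgh0, zero_comp]
  refine ⟨{
    B := (shiftFunctor C ((i + 1 : ℕ) : ℤ)).obj W
    g := ciso.hom ≫ g0
    r := eiso.hom ≫ biprod.fst
    gr := by
      rw [show (ciso.hom ≫ g0) ≫ eiso.hom ≫ biprod.fst =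
        ((ciso.hom ≫ g0) ≫ eiso.hom) ≫ biprod.fst by simp only [Category.assoc],
        he1]
      simp
    iso0 := fun h => absurd h (Nat.succ_ne_zero i)
    fb := fun hi' => by
      rw [show f (i + 1) ≫ (eiso.hom ≫ biprod.fst) ≫ (ciso.hom ≫ g0) =
        f (i + 1) ≫ ((eiso.hom ≫ biprod.fst) ≫ (ciso.hom ≫ g0)) by
          simp only [Category.assoc], hrg, Preadditive.comp_sub, Category.comp_id]
      rw [show f (i + 1) ≫ (f i ≫ S.r) ≫ biprod.inr ≫ eiso.inv =
        (f (i + 1) ≫ f i) ≫ S.r ≫ biprod.inr ≫ eiso.inv by simp only [Category.assoc]]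
      rw [hcx i hi', zero_comp, sub_zero]
    gc := fun hi' => by
      rw [K2 i hi', Preadditive.comp_sub, Category.comp_id]
      rw [show (ciso.hom ≫ g0) ≫ f i ≫ s i =
        ((ciso.hom ≫ g0) ≫ f i) ≫ s i by simp only [Category.assoc], hgf0, zero_comp,
        sub_zero]
  }, δ ≫ (shiftFunctor C (1 : ℤ)).map ciso.inv, hT2⟩

noncomputable def stageAux : ∀ i : ℕ, StageData n A f s i
  | 0 => baseStage n A f s K1
  | (i + 1) =>
    if hi : i < n then (stepEx n A f s K2 hcx i hi (stageAux i)).choose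
    else trivStage n A f s (i + 1) (by omega)

lemma stageAux_tri (i : ℕ) (hi : i < n) :
    ∃ dd, Triangle.mk (stageAux n A f s K1 K2 hcx (i + 1)).g
      (f i ≫ (stageAux n A f s K1 K2 hcx i).r) dd ∈ distTriang C := by
  have h := (stepEx n A f s K2 hcx i hi (stageAux n A f s K1 K2 hcx i)).choose_spec
  have heq : stageAux n A f s K1 K2 hcx (i + 1) =
      (stepEx n A f s K2 hcx i hi (stageAux n A f s K1 K2 hcx i)).choose := by
    rw [stageAux, dif_pos hi]
  rw [heq]
  exact h

include K1 K2 hcx in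
lemma postnikov_exists : ∃ P : PostnikovSystem n A f, True := by
  refine ⟨{
    B := fun i => (stageAux n A f s K1 K2 hcx i).B
    g := fun i => (stageAux n A f s K1 K2 hcx i).g
    h := fun i => if hi : i < n then f i ≫ (stageAux n A f s K1 K2 hcx i).r else 0
    g0_isIso := (stageAux n A f s K1 K2 hcx 0).iso0 rfl
    comm := fun i hi => by
      rw [dif_pos hi, Category.assoc]
      exact (stageAux n A f s K1 K2 hcx i).fb hi
    tri := fun i hi => by
      rw [dif_pos hi]
      exact stageAux_tri n A f s K1 K2 hcx i hi
  }, trivial⟩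

end Existence

theorem exact_complex_convolution_zero
    {k : Type*} [Field k] [Linear k C] [HasFiniteBiproducts C]
    (Q : ℤ → C)
    (n : ℕ) (A : ℕ → C) (f : ∀ i : ℕ, A (i + 1) ⟶ A i)
    (hcx : ∀ i : ℕ, i + 1 < n → f (i + 1) ≫ f i = 0)
    -- identifications of the terms with finite biproducts of the `Q j`
    (J : ℕ → Type) [∀ i, Fintype (J i)]
    (d : ∀ i, J i → ℤ)
    (e : ∀ i, A i ≅ ⨁ fun α : J i => Q (d i α))
    (c : ∀ i, J i → J (i + 1) → k)
    -- no matrix entries of negative degree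
    (hlow : ∀ i : ℕ, i < n → ∀ (α : J (i + 1)) (β : J i), d i β < d (i + 1) α →
      biproduct.ι (fun α : J (i + 1) => Q (d (i + 1) α)) α ≫ (e (i + 1)).inv ≫ f i ≫
        (e i).hom ≫ biproduct.π (fun β : J i => Q (d i β)) β = 0)
    -- degree-zero matrix entries are the scalars `c i β α • id`
    (hdiag : ∀ i : ℕ, i < n → ∀ (α : J (i + 1)) (β : J i) (hd : d (i + 1) α = d i β),
      biproduct.ι (fun α : J (i + 1) => Q (d (i + 1) α)) α ≫ (e (i + 1)).inv ≫ f i ≫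
        (e i).hom ≫ biproduct.π (fun β : J i => Q (d i β)) β
        = c i β α • eqToHom (congrArg Q hd))
    -- exactness of the scalar complexes `k^{d_n^{-1}(j)} → ⋯ → k^{d_0^{-1}(j)}` at every spot:
    -- at the middle spots,
    (hex_mid : ∀ i : ℕ, i + 1 < n → ∀ (j : ℤ) (v : {α : J (i + 1) // d (i + 1) α = j} → k),
      scalarMap d c i j v = 0 → ∃ w, scalarMap d c (i + 1) j w = v)
    -- at the top spot (the first map is injective),
    (hex_top : ∀ i : ℕ, i + 1 = n → ∀ (j : ℤ) (v : {α : J (i + 1) // d (i + 1) α = j} → k),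
      scalarMap d c i j v = 0 → v = 0)
    -- at the bottom spot (the last map is surjective),
    (hex_bot : 0 < n → ∀ (j : ℤ) (w : {β : J 0 // d 0 β = j} → k),
      ∃ v, scalarMap d c 0 j v = w)
    -- and in the degenerate case `n = 0` exactness means the complex vanishes
    (hex_zero : n = 0 → ∀ (j : ℤ) (w : {β : J 0 // d 0 β = j} → k), w = 0) :
    (∃ P : PostnikovSystem n A f, IsZero (P.B n)) ∧
      (∀ X : C, IsConvolution n A f X → IsZero X) := by
  classical
  have hlow' : ∀ i : ℕ, i < n → ∀ (α : J (i + 1)) (β : J i), d i β < d (i + 1) α →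
      ent Q d A e (f i) α β = 0 := hlow
  have hdiag' : ∀ i : ℕ, i < n → ∀ (α : J (i + 1)) (β : J i) (hd : d (i + 1) α = d i β),
      ent Q d A e (f i) α β = c i β α • eqToHom (congrArg Q hd) := hdiag
  by_cases hn : 0 < n
  · obtain ⟨s, K1, K2, K3⟩ :=
      contraction_exists Q d A e n f c hcx hlow' hdiag' hex_mid hex_top hex_bot
    constructor
    · obtain ⟨P, -⟩ := postnikov_exists n A f s K1 K2 hcx
      exact ⟨P, postnikov_isZero n A f s K1 K2 K3 hn P⟩
    · rintro X ⟨P, ⟨iso⟩⟩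
      exact (postnikov_isZero n A f s K1 K2 K3 hn P).of_iso iso.symm
  · have hn0 : n = 0 := by omega
    subst hn0
    have hJ0 : IsEmpty (J 0) := ⟨fun β => by
      have h1 := congrFun (hex_zero rfl (d 0 β) (fun _ => 1)) ⟨β, rfl⟩
      simp only [Pi.zero_apply] at h1
      exact one_ne_zero h1⟩
    have hbz : (𝟙 (⨁ fun α : J 0 => Q (d 0 α)) : _) = 0 := by
      apply biproduct.hom_ext
      intro j
      exact hJ0.elim j
    have hA0 : IsZero (A 0) := by
      rw [IsZero.iff_id_eq_zero]
      calc 𝟙 (A 0) = (e 0).hom ≫ (e 0).inv := ((e 0).hom_inv_id).symm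
        _ = (e 0).hom ≫ 𝟙 _ ≫ (e 0).inv := by rw [Category.id_comp]
        _ = 0 := by rw [hbz, zero_comp, comp_zero]
    have key : ∀ P : PostnikovSystem 0 A f, IsZero (P.B 0) := by
      intro P
      have := P.g0_isIso
      have hz : IsZero ((shiftFunctor C (-((0 : ℕ) : ℤ))).obj (P.B 0)) :=
        hA0.of_iso (asIso (P.g 0))
      exact isZero_of_shift_isZero _ _ hz
    constructor
    · obtain ⟨P, -⟩ := postnikov_exists 0 A f (fun _ => 0)
        (fun h => absurd h (by omega)) (fun i h => absurd h (by omega))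
        (fun i h => absurd h (by omega))
      exact ⟨P, key P⟩
    · rintro X ⟨P, ⟨iso⟩⟩
      exact (key P).of_iso iso.symm
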